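/- Let a Unique Games instance on a d-regular weighted graph G on n vertices with label-extended adjacency matrix M be given, and suppose the labeling L : V → [k] satisfies constraints on edges of total weight at least (1−ε)·(nd/2). Let 0 < 2ε < γ, and let W be the span of the eigenvectors of M with eigenvalue greater than (1−γ)d. Then there exists a unit vector v ∈ W that can be written v = α·ỹ^L + β·y_⊥, where ỹ^L = y^L/√n, y_⊥ is a unit vector orthogonal to ỹ^L, α = ⟨v, ỹ^L⟩ ≥ √(1 − 2ε/γ) > 0, and |β| ≤ √(2ε/γ). -/

import Mathlib

set_option maxHeartbeats 1000000


open Matrix Finset RealInnerProductSpace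

/-- For a `(1−ε)`-satisfiable Unique Games instance on a `d`-regular
graph, with `W` the span of eigenvectors of the label-extended matrix `M` with
eigenvalue greater than `(1−γ)d` (where `0 < 2ε < γ`), there is a unit vector `v ∈ W`
of the form `v = α ỹ^L + β y_⊥` with `α = ⟨v, ỹ^L⟩ ≥ √(1−2ε/γ) > 0`, `|β| ≤ √(2ε/γ)`
and `y_⊥` a unit vector orthogonal to `ỹ^L`. -/
theorem exists_nice_vector_in_top_eigenspace
    {n k : ℕ} (hn : 0 < n) (hdim : 1 < n * k)
    (w : Fin n → Fin n → ℝ) (d ε γ : ℝ)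
    (hd : 0 < d) (hε : 0 < 2 * ε) (hεγ : 2 * ε < γ)
    (π : Fin n → Fin n → Equiv.Perm (Fin k))
    (hw_symm : ∀ u v, w u v = w v u)
    (hw_nonneg : ∀ u v, 0 ≤ w u v)
    (hπ_symm : ∀ u v, π v u = (π u v)⁻¹)
    (hreg : ∀ u, ∑ v, w u v = d)
    (M : Matrix (Fin n × Fin k) (Fin n × Fin k) ℝ)
    (hM : ∀ p q, M p q = w p.1 q.1 * (if π p.1 q.1 p.2 = q.2 then 1 else 0))
    (L : Fin n → Fin k)
    (hsat : (1 - ε) * (n * d / 2)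
        ≤ (1 / 2) * ∑ u, ∑ v, (if π u v (L u) = L v then w u v else 0))
    (ytil : EuclideanSpace ℝ (Fin n × Fin k))
    (hytil : ∀ p, ytil p = if p.2 = L p.1 then 1 / Real.sqrt n else 0)
    (W : Submodule ℝ (EuclideanSpace ℝ (Fin n × Fin k)))
    (hW : W = Submodule.span ℝ {v : EuclideanSpace ℝ (Fin n × Fin k) |
        v ≠ 0 ∧ ∃ μ : ℝ, (1 - γ) * d < μ ∧ M.mulVec v = μ • v}) :
    ∃ v ∈ W, ‖v‖ = 1 ∧
      ∃ (β : ℝ) (yperp : EuclideanSpace ℝ (Fin n × Fin k)),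
        ‖yperp‖ = 1 ∧ ⟪yperp, ytil⟫ = 0 ∧
        v = ⟪v, ytil⟫ • ytil + β • yperp ∧
        Real.sqrt (1 - 2 * ε / γ) ≤ ⟪v, ytil⟫ ∧
        |β| ≤ Real.sqrt (2 * ε / γ) := by
  classical
  have hn' : (0:ℝ) < n := by exact_mod_cast hn
  -- the linear map associated to M
  let T : EuclideanSpace ℝ (Fin n × Fin k) →ₗ[ℝ] EuclideanSpace ℝ (Fin n × Fin k) :=
    { toFun := fun x => WithLp.toLp 2 (M.mulVec x)
      map_add' := fun x y => by simp [M.mulVec_add]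
      map_smul' := fun c x => by simp [M.mulVec_smul] }
  have hinner : ∀ x y : EuclideanSpace ℝ (Fin n × Fin k), ⟪x, y⟫ = ∑ p, x p * y p := by
    intro x y
    simp [PiLp.inner_apply, RCLike.inner_apply, mul_comm]
  have hT_apply : ∀ (x : EuclideanSpace ℝ (Fin n × Fin k)) (p : Fin n × Fin k), T x p = ∑ q, M p q * x q := by
    intro x p; rfl
  -- quadratic form formula
  have hQform : ∀ x : EuclideanSpace ℝ (Fin n × Fin k),
      ⟪x, T x⟫ = ∑ u, ∑ v, w u v * ∑ i, x (u, i) * x (v, π u v i) := by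
    intro x
    rw [hinner, Fintype.sum_prod_type]
    have step : ∀ (u : Fin n) (i : Fin k),
        x (u, i) * T x (u, i) = ∑ v, w u v * (x (u, i) * x (v, π u v i)) := by
      intro u i
      rw [hT_apply, Fintype.sum_prod_type]
      simp_rw [hM]
      have : ∀ v : Fin n, ∑ j, w u v * (if π u v i = j then (1:ℝ) else 0) * x (v, j)
          = w u v * x (v, π u v i) := by
        intro v
        simp [mul_ite, ite_mul, Finset.sum_ite_eq]
      simp_rw [this, Finset.mul_sum]
      exact Finset.sum_congr rfl fun v _ => by ring
    calc ∑ u, ∑ i, x (u, i) * T x (u, i)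
        = ∑ u, ∑ i, ∑ v, w u v * (x (u, i) * x (v, π u v i)) := by
          exact Finset.sum_congr rfl fun u _ => Finset.sum_congr rfl fun i _ => step u i
      _ = ∑ u, ∑ v, ∑ i, w u v * (x (u, i) * x (v, π u v i)) := by
          exact Finset.sum_congr rfl fun u _ => Finset.sum_comm
      _ = ∑ u, ∑ v, w u v * ∑ i, x (u, i) * x (v, π u v i) := by
          simp_rw [Finset.mul_sum]
  -- two expressions for d * ‖x‖²
  have hnormsq : ∀ x : EuclideanSpace ℝ (Fin n × Fin k), ‖x‖ ^ 2 = ∑ u, ∑ i, x (u, i) ^ 2 := by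
    intro x
    rw [← real_inner_self_eq_norm_sq, hinner, Fintype.sum_prod_type]
    simp [sq]
  have hnorm1 : ∀ x : EuclideanSpace ℝ (Fin n × Fin k), d * ‖x‖ ^ 2 = ∑ u, ∑ v, w u v * ∑ i, x (u, i) ^ 2 := by
    intro x
    rw [hnormsq, Finset.mul_sum]
    refine Finset.sum_congr rfl fun u _ => ?_
    rw [← hreg u, Finset.sum_mul]
  have hnorm2 : ∀ x : EuclideanSpace ℝ (Fin n × Fin k), d * ‖x‖ ^ 2 = ∑ u, ∑ v, w u v * ∑ i, x (v, π u v i) ^ 2 := by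
    intro x
    have : ∀ u v : Fin n, ∑ i, x (v, π u v i) ^ 2 = ∑ i, x (v, i) ^ 2 := by
      intro u v
      exact Equiv.sum_comp (π u v) (fun j => x (v, j) ^ 2)
    simp_rw [this]
    rw [Finset.sum_comm]
    rw [hnormsq, Finset.mul_sum]
    refine Finset.sum_congr rfl fun v _ => ?_
    have : ∑ u, w u v = d := by
      rw [← hreg v]; exact Finset.sum_congr rfl fun u _ => hw_symm u v
    rw [← this, Finset.sum_mul]
  -- Rayleigh bound : quadratic form at most d ‖x‖²
  have hbound : ∀ x : EuclideanSpace ℝ (Fin n × Fin k), ⟪x, T x⟫ ≤ d * ‖x‖ ^ 2 := by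
    intro x
    have inner_id : ∀ a b : Fin k → ℝ,
        ∑ i, (a i - b i) ^ 2 = ∑ i, a i ^ 2 + ∑ i, b i ^ 2 - 2 * ∑ i, a i * b i := by
      intro a b
      rw [← Finset.sum_add_distrib, Finset.mul_sum, ← Finset.sum_sub_distrib]
      exact Finset.sum_congr rfl fun i _ => by ring
    have h4 : 0 ≤ ∑ u, ∑ v, w u v * ∑ i, (x (u, i) - x (v, π u v i)) ^ 2 := by
      refine Finset.sum_nonneg fun u _ => Finset.sum_nonneg fun v _ => ?_
      exact mul_nonneg (hw_nonneg u v) (Finset.sum_nonneg fun i _ => sq_nonneg _)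
    have h5 : ∑ u, ∑ v, w u v * ∑ i, (x (u, i) - x (v, π u v i)) ^ 2
        = (∑ u, ∑ v, w u v * ∑ i, x (u, i) ^ 2)
          + (∑ u, ∑ v, w u v * ∑ i, x (v, π u v i) ^ 2)
          - 2 * (∑ u, ∑ v, w u v * ∑ i, x (u, i) * x (v, π u v i)) := by
      have percell : ∀ u v : Fin n,
          w u v * ∑ i, (x (u, i) - x (v, π u v i)) ^ 2
          = w u v * ∑ i, x (u, i) ^ 2 + w u v * ∑ i, x (v, π u v i) ^ 2
            - 2 * (w u v * ∑ i, x (u, i) * x (v, π u v i)) := by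
        intro u v
        rw [inner_id (fun i => x (u, i)) (fun i => x (v, π u v i))]
        ring
      simp_rw [percell, Finset.sum_sub_distrib, Finset.sum_add_distrib, ← Finset.mul_sum]
    rw [hQform]
    have e1 := hnorm1 x
    have e2 := hnorm2 x
    linarith [h5 ▸ h4]
  -- symmetry of M and T
  have hMsymm : ∀ p q, M p q = M q p := by
    intro p q
    rw [hM, hM, hw_symm p.1 q.1, hπ_symm p.1 q.1]
    congr 1
    by_cases h : π p.1 q.1 p.2 = q.2
    · have h2 : (π p.1 q.1)⁻¹ q.2 = p.2 := by rw [← h]; simp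
      simp [h, h2]
    · have h2 : (π p.1 q.1)⁻¹ q.2 ≠ p.2 := by
        intro hc
        exact h (by rw [← hc]; simp)
      simp [h, h2, Equiv.Perm.inv_def] at h2 ⊢; exact h2
  have hTsym : T.IsSymmetric := by
    intro x y
    rw [hinner, hinner]
    simp_rw [hT_apply, Finset.sum_mul, Finset.mul_sum]
    rw [Finset.sum_comm]
    refine Finset.sum_congr rfl fun p _ => Finset.sum_congr rfl fun q _ => ?_
    rw [hMsymm q p]; ring
  -- eigenbasis
  have hrank : Module.finrank ℝ (EuclideanSpace ℝ (Fin n × Fin k)) = n * k := by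
    simp [finrank_euclideanSpace]
  let e : OrthonormalBasis (Fin (n * k)) ℝ (EuclideanSpace ℝ (Fin n × Fin k)) := hTsym.eigenvectorBasis hrank
  let μ : Fin (n * k) → ℝ := hTsym.eigenvalues hrank
  have he_eig : ∀ i, T (e i) = μ i • e i := fun i => hTsym.apply_eigenvectorBasis hrank i
  have he_norm : ∀ i, ‖e i‖ = 1 := fun i => e.orthonormal.1 i
  have he_inner : ∀ i j, ⟪e i, e j⟫ = if i = j then (1:ℝ) else 0 := by
    have := orthonormal_iff_ite.mp e.orthonormal
    intro i j
    simpa using this i j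
  obtain ⟨c, hc⟩ : ∃ c : Fin (n * k) → ℝ, c = fun i => ⟪e i, ytil⟫ := ⟨_, rfl⟩
  -- ytil is a unit vector
  have hy_inner : ⟪ytil, ytil⟫ = 1 := by
    rw [hinner, Fintype.sum_prod_type]
    have : ∀ u : Fin n, ∑ i : Fin k, ytil (u, i) * ytil (u, i) = 1 / n := by
      intro u
      have : ∀ i : Fin k, ytil (u, i) * ytil (u, i)
          = if i = L u then 1 / (n:ℝ) else 0 := by
        intro i
        rw [hytil]
        by_cases h : i = L u
        · rw [if_pos h, if_pos h, div_mul_div_comm, one_mul,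
            Real.mul_self_sqrt (by positivity)]
        · rw [if_neg h, if_neg h, mul_zero]
      simp_rw [this]
      simp
    simp_rw [this]
    simp
    field_simp
  have hy_norm : ‖ytil‖ = 1 := by
    have := real_inner_self_eq_norm_sq ytil
    rw [hy_inner] at this
    nlinarith [norm_nonneg ytil]
  -- Parseval
  have hParseval : ∑ i, c i ^ 2 = 1 := by
    have := e.sum_inner_mul_inner ytil ytil
    rw [hy_inner] at this
    rw [← this]
    refine Finset.sum_congr rfl fun i _ => ?_
    have h2 : ⟪ytil, e i⟫ = c i := by
      simp only [hc]; exact (real_inner_comm ytil (e i)).symm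
    rw [h2, sq]
    simp only [hc]
  -- quadratic form of ytil in eigenbasis
  have hQy_eig : ⟪ytil, T ytil⟫ = ∑ i, μ i * c i ^ 2 := by
    have := e.sum_inner_mul_inner ytil (T ytil)
    rw [← this]
    refine Finset.sum_congr rfl fun i _ => ?_
    have h1 : ⟪e i, T ytil⟫ = μ i * c i := by
      rw [← hTsym (e i) ytil, he_eig i, real_inner_smul_left]
      simp only [hc]
    have h2 : ⟪ytil, e i⟫ = c i := by
      simp only [hc]; exact (real_inner_comm ytil (e i)).symm
    rw [h1, h2, sq]
    ring
  -- eigenvalues at most d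
  have hμd : ∀ i, μ i ≤ d := by
    intro i
    have h1 : ⟪e i, T (e i)⟫ = μ i := by
      rw [he_eig i, real_inner_smul_right, real_inner_self_eq_norm_sq, he_norm i]
      simp
    have := hbound (e i)
    rw [h1, he_norm i] at this
    simpa using this
  -- lower bound on the quadratic form of ytil
  have hQy_lb : (1 - ε) * d ≤ ⟪ytil, T ytil⟫ := by
    rw [hQform]
    have term : ∀ u v : Fin n,
        w u v * ∑ i, ytil (u, i) * ytil (v, π u v i)
        = (if π u v (L u) = L v then w u v else 0) * (1 / n) := by
      intro u v
      have hsum : ∑ i, ytil (u, i) * ytil (v, π u v i)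
          = (1 / Real.sqrt n) * ytil (v, π u v (L u)) := by
        have : ∀ i : Fin k, ytil (u, i) * ytil (v, π u v i)
            = if i = L u then (1 / Real.sqrt n) * ytil (v, π u v i) else 0 := by
          intro i
          rw [hytil (u, i)]
          by_cases h : i = L u <;> simp [h]
        simp_rw [this]
        simp
      rw [hsum, hytil (v, π u v (L u))]
      by_cases h : π u v (L u) = L v
      · rw [if_pos h, if_pos h, div_mul_div_comm, one_mul,
          Real.mul_self_sqrt (by positivity)]
      · rw [if_neg h, if_neg h]; ring
    simp_rw [term]
    have hsat' : (1 - ε) * (n * d) ≤ ∑ u, ∑ v, (if π u v (L u) = L v then w u v else 0) := by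
      linarith
    have : ∑ u, ∑ v, (if π u v (L u) = L v then w u v else 0) * (1 / n)
        = (∑ u, ∑ v, (if π u v (L u) = L v then w u v else 0)) * (1 / n) := by
      simp_rw [Finset.sum_mul]
    rw [this, mul_one_div, le_div_iff₀ hn']
    have heq : (1 - ε) * d * (n:ℝ) = (1 - ε) * ((n:ℝ) * d) := by ring
    rw [heq]
    exact hsat'
  -- the heavy set of eigenvalues
  obtain ⟨S, hS⟩ : ∃ S : Finset (Fin (n * k)),
      S = Finset.univ.filter (fun i => (1 - γ) * d < μ i) := ⟨_, rfl⟩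
  obtain ⟨t, hts⟩ : ∃ t : ℝ, t = ∑ i ∈ S, c i ^ 2 := ⟨_, rfl⟩
  have ht_le : t ≤ 1 := by
    rw [hts, hS, ← hParseval]
    exact Finset.sum_le_sum_of_subset_of_nonneg (Finset.filter_subset _ _)
      (fun i _ _ => sq_nonneg _)
  have hcompl : ∑ i ∈ Sᶜ, c i ^ 2 = 1 - t := by
    rw [hts, eq_sub_iff_add_eq, add_comm, Finset.sum_add_sum_compl]
    exact hParseval
  have hγ : 0 < γ := lt_trans hε hεγ
  -- key : t ≥ 1 - ε/γ
  have ht_lb : 1 - ε / γ ≤ t := by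
    have split : ∑ i, μ i * c i ^ 2 = ∑ i ∈ S, μ i * c i ^ 2 + ∑ i ∈ Sᶜ, μ i * c i ^ 2 :=
      (Finset.sum_add_sum_compl S _).symm
    have hS_bound : ∑ i ∈ S, μ i * c i ^ 2 ≤ d * t := by
      rw [hts, Finset.mul_sum]
      exact Finset.sum_le_sum fun i _ => mul_le_mul_of_nonneg_right (hμd i) (sq_nonneg _)
    have hSc_bound : ∑ i ∈ Sᶜ, μ i * c i ^ 2 ≤ (1 - γ) * d * (1 - t) := by
      rw [← hcompl, Finset.mul_sum]
      refine Finset.sum_le_sum fun i hi => ?_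
      have : ¬ ((1 - γ) * d < μ i) := by
        simpa [hS] using (Finset.mem_compl.mp hi)
      exact mul_le_mul_of_nonneg_right (not_lt.mp this) (sq_nonneg _)
    have hq : (1 - ε) * d ≤ d * t + (1 - γ) * d * (1 - t) := by
      rw [hQy_eig, split] at hQy_lb
      linarith [hS_bound, hSc_bound]
    have h1 : γ * d * (1 - t) ≤ ε * d := by nlinarith
    have h2 : 1 - t ≤ ε / γ := by
      rw [le_div_iff₀ hγ]
      refine le_of_mul_le_mul_right ?_ hd
      have h4 : (1 - t) * γ * d = γ * d * (1 - t) := by ring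
      rw [h4]; exact h1
    linarith
  have hεγ' : 0 < 1 - 2 * ε / γ := by
    rw [sub_pos, div_lt_one hγ]; exact hεγ
  have ht_lb2 : 1 - 2 * ε / γ ≤ t := by
    have h3 : ε / γ ≤ 2 * ε / γ := by
      rw [div_le_div_iff₀ hγ hγ]; nlinarith
    linarith
  have ht_pos : 0 < t := lt_of_lt_of_le hεγ' ht_lb2
  -- the vector a and its normalization v
  obtain ⟨a, ha⟩ : ∃ a : EuclideanSpace ℝ (Fin n × Fin k), a = ∑ i ∈ S, c i • e i := ⟨_, rfl⟩
  have ha_mem : a ∈ W := by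
    rw [hW, ha]
    refine Submodule.sum_mem _ fun i hi => Submodule.smul_mem _ _ (Submodule.subset_span ?_)
    rw [hS, Finset.mem_filter] at hi
    refine ⟨fun hz => ?_, μ i, hi.2, by simpa [T] using congrArg WithLp.ofLp (he_eig i)⟩
    have h0 := he_norm i
    rw [hz] at h0
    simp at h0
  have hinner_ae : ∀ x : EuclideanSpace ℝ (Fin n × Fin k), ⟪a, x⟫ = ∑ i ∈ S, c i * ⟪e i, x⟫ := by
    intro x
    rw [ha, sum_inner]
    exact Finset.sum_congr rfl fun i _ => real_inner_smul_left _ _ _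
  have hay : ⟪a, ytil⟫ = t := by
    rw [hinner_ae, hts]
    exact Finset.sum_congr rfl fun i _ => by rw [hc]; ring
  have haa : ⟪a, a⟫ = t := by
    rw [hinner_ae]
    have : ∀ i, ⟪e i, a⟫ = if i ∈ S then c i else 0 := by
      intro i
      rw [ha, inner_sum]
      simp_rw [real_inner_smul_right, he_inner, mul_ite, mul_one, mul_zero]
      exact Finset.sum_ite_eq S i c
    simp_rw [this]
    rw [hts]
    refine Finset.sum_congr rfl fun i hi => ?_
    rw [if_pos hi, sq]
  have hanorm : ‖a‖ = Real.sqrt t := by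
    rw [← Real.sqrt_sq (norm_nonneg a), ← real_inner_self_eq_norm_sq, haa]
  obtain ⟨α, hα⟩ : ∃ α : ℝ, α = Real.sqrt t := ⟨_, rfl⟩
  have hα_pos : 0 < α := hα ▸ Real.sqrt_pos.mpr ht_pos
  have hα_sq : α ^ 2 = t := by rw [hα]; exact Real.sq_sqrt (le_of_lt ht_pos)
  obtain ⟨v, hv⟩ : ∃ v : EuclideanSpace ℝ (Fin n × Fin k), v = α⁻¹ • a := ⟨_, rfl⟩
  have hv_mem : v ∈ W := by rw [hv]; exact Submodule.smul_mem _ _ ha_mem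
  have hv_norm : ‖v‖ = 1 := by
    rw [hv, norm_smul, hanorm, ← hα, Real.norm_eq_abs, abs_inv,
      abs_of_pos hα_pos, inv_mul_cancel₀ (ne_of_gt hα_pos)]
  have hvy : ⟪v, ytil⟫ = α := by
    rw [hv, real_inner_smul_left, hay, ← hα_sq, sq, inv_mul_cancel_left₀ (ne_of_gt hα_pos)]
  have hvy_lb : Real.sqrt (1 - 2 * ε / γ) ≤ ⟪v, ytil⟫ := by
    rw [hvy, hα]
    exact Real.sqrt_le_sqrt ht_lb2
  -- the residual
  obtain ⟨r, hr⟩ : ∃ r : EuclideanSpace ℝ (Fin n × Fin k), r = v - α • ytil := ⟨_, rfl⟩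
  have hr_inner : ⟪r, ytil⟫ = 0 := by
    rw [hr, inner_sub_left, real_inner_smul_left, hy_inner, hvy]
    ring
  have hr_normsq : ‖r‖ ^ 2 = 1 - α ^ 2 := by
    rw [hr, norm_sub_sq_real, hv_norm, real_inner_smul_right, hvy, norm_smul,
      hy_norm, Real.norm_eq_abs, abs_of_pos hα_pos]
    ring
  have hr_norm_le : ‖r‖ ≤ Real.sqrt (2 * ε / γ) := by
    have h1 : ‖r‖ ^ 2 ≤ 2 * ε / γ := by
      rw [hr_normsq, hα_sq]; linarith
    calc ‖r‖ = Real.sqrt (‖r‖ ^ 2) := by rw [Real.sqrt_sq (norm_nonneg r)]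
      _ ≤ Real.sqrt (2 * ε / γ) := Real.sqrt_le_sqrt h1
  refine ⟨v, hv_mem, hv_norm, ‖r‖, ?_⟩
  by_cases hr0 : r = 0
  · -- need an arbitrary unit vector orthogonal to ytil
    have : ∃ z : EuclideanSpace ℝ (Fin n × Fin k), z ∈ (ℝ ∙ ytil)ᗮ ∧ z ≠ 0 := by
      by_contra hcon
      push_neg at hcon
      have hbot : (ℝ ∙ ytil)ᗮ = ⊥ := by
        rw [Submodule.eq_bot_iff]
        intro z hz
        by_contra hz0
        exact hz0 (by by_contra h2; exact h2 (hcon z hz))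
      rw [Submodule.orthogonal_eq_bot_iff] at hbot
      have hy0 : ytil ≠ 0 := by
        intro h0
        rw [h0] at hy_norm
        simp at hy_norm
      have := finrank_span_singleton (K := ℝ) hy0
      rw [hbot] at this
      rw [finrank_top] at this
      rw [hrank] at this
      omega
    obtain ⟨z, hz_mem, hz0⟩ := this
    refine ⟨‖z‖⁻¹ • z, ?_, ?_, ?_, hvy_lb, ?_⟩
    · rw [norm_smul, Real.norm_eq_abs, abs_inv, abs_of_pos (norm_pos_iff.mpr hz0),
        inv_mul_cancel₀ (ne_of_gt (norm_pos_iff.mpr hz0))]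
    · rw [real_inner_smul_left]
      have hz2 : ⟪ytil, z⟫ = 0 :=
        (Submodule.mem_orthogonal _ z).mp hz_mem ytil (Submodule.mem_span_singleton_self ytil)
      have hz3 : ⟪z, ytil⟫ = 0 := by rw [real_inner_comm]; exact hz2
      rw [hz3, mul_zero]
    · rw [hvy, hr0, norm_zero, zero_smul, add_zero]
      have h0 : v - α • ytil = 0 := by rw [← hr, hr0]
      exact (sub_eq_zero.mp h0)
    · rw [hr0, norm_zero, abs_zero]
      positivity
  · refine ⟨‖r‖⁻¹ • r, ?_, ?_, ?_, hvy_lb, ?_⟩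
    · rw [norm_smul, Real.norm_eq_abs, abs_inv, abs_of_pos (norm_pos_iff.mpr hr0),
        inv_mul_cancel₀ (ne_of_gt (norm_pos_iff.mpr hr0))]
    · rw [real_inner_smul_left, hr_inner, mul_zero]
    · rw [hvy, smul_inv_smul₀ (norm_ne_zero_iff.mpr hr0)]
      rw [hr]; abel
    · rw [abs_norm]; exact hr_norm_le
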